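/- Let γ ≥ 3 be an integer. The function f_γ(λ) := (∑_{j=1}^{γ+1} j λ^j)/(∑_{i=1}^{γ+2} λ^i) is nondecreasing on (0, 1]; that is, for all 0 < λ₁ ≤ λ₂ ≤ 1, f_γ(λ₁) ≤ f_γ(λ₂). -/

import Mathlib

open Finset

lemma sumr1 (m : ℕ) : ∑ j ∈ range m, (j:ℝ) = m*((m:ℝ)-1)/2 := by
  induction m with
  | zero => simp
  | succ k ih => rw [Finset.sum_range_succ, ih]; push_cast; ring

lemma sumr2 (m : ℕ) : ∑ j ∈ range m, (j:ℝ)^2 = m*((m:ℝ)-1)*(2*m-1)/6 := by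
  induction m with
  | zero => simp
  | succ k ih => rw [Finset.sum_range_succ, ih]; push_cast; ring

lemma telescope (x : ℝ) (a b : ℕ) (h : a ≤ b+1) :
    ∑ s ∈ Icc a b, (x^s - x^(s+1)) = x^a - x^(b+1) := by
  have : Icc a b = Ico a (b+1) := by rw [Finset.Ico_add_one_right_eq_Icc]
  rw [this, Finset.sum_Ico_eq_sub _ h,
    Finset.sum_range_sub' (fun s => x^s) (b+1), Finset.sum_range_sub' (fun s => x^s) a]
  simp

lemma deltaEq (n ρ : ℕ) (h1 : 1 ≤ ρ) (h2 : ρ ≤ n) :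
    ∑ j ∈ Icc ρ (n-1), (j:ℝ)*(2*j - (n:ℝ) - ρ) =
      ((n:ℝ)-ρ)*(((n:ℝ)-ρ-1)*((n:ℝ)-ρ-2) - 6*ρ)/6 := by
  have hn1 : 1 ≤ n := le_trans h1 h2
  have hIcc : Icc ρ (n-1) = Ico ρ n := by
    ext y; simp only [Finset.mem_Icc, Finset.mem_Ico]; omega
  rw [hIcc, Finset.sum_Ico_eq_sub _ h2]
  have e : ∀ m : ℕ, ∑ j ∈ range m, (j:ℝ)*(2*j - (n:ℝ) - ρ)
      = 2*(m*((m:ℝ)-1)*(2*m-1)/6) - ((n:ℝ)+ρ)*(m*((m:ℝ)-1)/2) := by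
    intro m
    have : ∀ j : ℕ, (j:ℝ)*(2*j - (n:ℝ) - ρ) = 2*(j:ℝ)^2 - ((n:ℝ)+ρ)*j := by
      intro j; ring
    simp_rw [this]
    rw [Finset.sum_sub_distrib, ← Finset.mul_sum, ← Finset.mul_sum, sumr1, sumr2]
  rw [e n, e ρ]
  ring

noncomputable def Cc (n s : ℕ) : ℝ :=
  ∑ j ∈ Icc 1 (n-1), ∑ i ∈ Icc 1 n, if j+i ≤ s then (j:ℝ)*((j:ℝ)-(i:ℝ)) else 0

lemma Cstep (n s : ℕ) (hn : 1 ≤ n) (hs : n ≤ s) :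
    Cc n (s+1) = Cc n s + ∑ j ∈ Icc (s+1-n) (n-1), (j:ℝ)*(2*j - (s:ℝ) - 1) := by
  have key : Cc n (s+1) - Cc n s
      = ∑ j ∈ Icc 1 (n-1), ∑ i ∈ Icc 1 n, if j+i = s+1 then (j:ℝ)*((j:ℝ)-(i:ℝ)) else 0 := by
    unfold Cc
    rw [← Finset.sum_sub_distrib]
    refine Finset.sum_congr rfl (fun j hj => ?_)
    rw [← Finset.sum_sub_distrib]
    refine Finset.sum_congr rfl (fun i hi => ?_)
    split_ifs with h1 h2 h3 <;> first | omega | ring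
  have inner : ∀ j ∈ Icc 1 (n-1),
      (∑ i ∈ Icc 1 n, if j+i = s+1 then (j:ℝ)*((j:ℝ)-(i:ℝ)) else 0)
      = if s+1-n ≤ j then (j:ℝ)*(2*j - (s:ℝ) - 1) else 0 := by
    intro j hj
    simp only [Finset.mem_Icc] at hj
    have hj2 : j ≤ s := by omega
    have : ∀ i : ℕ, (j+i = s+1) = (i = s+1-j) := by
      intro i; apply propext; constructor <;> intro h <;> omega
    simp_rw [this]
    rw [Finset.sum_ite_eq' (Icc 1 n) (s+1-j)]
    by_cases hc : s+1-n ≤ j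
    · rw [if_pos (by simp [Finset.mem_Icc]; omega), if_pos hc]
      have : ((s+1-j : ℕ) : ℝ) = (s:ℝ)+1-(j:ℝ) := by
        push_cast [Nat.cast_sub (by omega : j ≤ s+1)]; ring
      rw [this]; ring
    · rw [if_neg (by simp [Finset.mem_Icc]; omega), if_neg hc]
  rw [Finset.sum_congr rfl inner] at key
  have : ∑ j ∈ Icc 1 (n-1), (if s+1-n ≤ j then (j:ℝ)*(2*j - (s:ℝ) - 1) else 0)
      = ∑ j ∈ Icc (s+1-n) (n-1), (j:ℝ)*(2*j - (s:ℝ) - 1) := by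
    rw [← Finset.sum_filter]
    congr 1
    ext y; simp [Finset.mem_Icc, Finset.mem_filter]; omega
  rw [this] at key
  linarith [key]

lemma csum (n : ℕ) (hn : 5 ≤ n) : ∀ r : ℕ, r ≤ n-1 →
    Cc n (n+r) = Cc n n + ∑ ρ ∈ Icc 1 r,
      ((n:ℝ)-ρ)*(((n:ℝ)-ρ-1)*((n:ℝ)-ρ-2) - 6*ρ)/6 := by
  intro r
  induction r with
  | zero => intro _; simp
  | succ k ih =>
    intro hk
    have hk' : k ≤ n-1 := by omega
    have hstep := Cstep n (n+k) (by omega) (by omega)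
    have harg : n+k+1-n = k+1 := by omega
    rw [harg] at hstep
    have hdelta := deltaEq n (k+1) (by omega) (by omega)
    have hsummand : ∀ j ∈ Icc (k+1) (n-1),
        (j:ℝ)*(2*j - ((n+k : ℕ):ℝ) - 1) = (j:ℝ)*(2*j - (n:ℝ) - (k+1:ℕ)) := by
      intro j _; push_cast; ring
    rw [Finset.sum_congr rfl hsummand, hdelta] at hstep
    rw [show n + (k+1) = (n+k)+1 by ring, hstep, ih hk',
      Finset.sum_Icc_succ_top (by omega : 1 ≤ k+1)]
    push_cast
    ring

lemma Csym (n u : ℕ) (hu : u ≤ n) : 0 ≤ Cc n u := by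
  have ext : Cc n u = ∑ j ∈ Icc 1 n, ∑ i ∈ Icc 1 n,
      (if j+i ≤ u then (j:ℝ)*((j:ℝ)-(i:ℝ)) else 0) := by
    unfold Cc
    refine Finset.sum_subset (fun y hy => ?_) (fun j hj hj' => ?_)
    · simp only [Finset.mem_Icc] at hy ⊢; omega
    · simp only [Finset.mem_Icc] at hj hj'
      have hjn : j = n := by omega
      subst hjn
      refine Finset.sum_eq_zero (fun i hi => ?_)
      simp only [Finset.mem_Icc] at hi
      rw [if_neg (by omega)]
  have swap : Cc n u = ∑ j ∈ Icc 1 n, ∑ i ∈ Icc 1 n,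
      (if j+i ≤ u then (i:ℝ)*((i:ℝ)-(j:ℝ)) else 0) := by
    rw [ext, Finset.sum_comm]
    refine Finset.sum_congr rfl (fun j _ => Finset.sum_congr rfl (fun i _ => ?_))
    rw [show i+j = j+i by ring]
  have key : 2 * Cc n u = ∑ j ∈ Icc 1 n, ∑ i ∈ Icc 1 n,
      (if j+i ≤ u then ((j:ℝ)-(i:ℝ))^2 else 0) := by
    nth_rewrite 1 [two_mul]
    nth_rewrite 1 [ext]; nth_rewrite 1 [swap]
    rw [← Finset.sum_add_distrib]
    refine Finset.sum_congr rfl (fun j _ => ?_)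
    rw [← Finset.sum_add_distrib]
    refine Finset.sum_congr rfl (fun i _ => ?_)
    split_ifs <;> ring
  have h2 : 0 ≤ 2 * Cc n u := by
    rw [key]
    refine Finset.sum_nonneg (fun j _ => Finset.sum_nonneg (fun i _ => ?_))
    split_ifs <;> positivity
  linarith

lemma Cfull (n : ℕ) (hn : 1 ≤ n) :
    Cc n (2*n-1) = (n:ℝ)^2*((n:ℝ)-1)*((n:ℝ)-5)/12 := by
  unfold Cc
  have step1 : ∀ j ∈ Icc 1 (n-1),
      (∑ i ∈ Icc 1 n, if j+i ≤ 2*n-1 then (j:ℝ)*((j:ℝ)-(i:ℝ)) else 0)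
      = (n:ℝ)*(j:ℝ)^2 - (j:ℝ)*((n:ℝ)*((n:ℝ)+1)/2) := by
    intro j hj
    simp only [Finset.mem_Icc] at hj
    have : ∀ i ∈ Icc 1 n, (if j+i ≤ 2*n-1 then (j:ℝ)*((j:ℝ)-(i:ℝ)) else 0)
        = (j:ℝ)^2 - (j:ℝ)*(i:ℝ) := by
      intro i hi; simp only [Finset.mem_Icc] at hi
      rw [if_pos (by omega)]; ring
    rw [Finset.sum_congr rfl this, Finset.sum_sub_distrib]
    have hIcc : Icc 1 n = Ico 1 (n+1) := by ext y; simp [Nat.lt_iff_add_one_le]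
    have c1 : ∑ i ∈ Icc 1 n, (i:ℝ) = (n:ℝ)*((n:ℝ)+1)/2 := by
      rw [hIcc, Finset.sum_Ico_eq_sub _ (by omega), sumr1, sumr1]
      push_cast; ring
    rw [Finset.sum_const, ← Finset.mul_sum, c1]
    simp only [Nat.card_Icc, nsmul_eq_mul]
    push_cast
    ring
  rw [Finset.sum_congr rfl step1]
  have hIcc : Icc 1 (n-1) = Ico 1 n := by ext y; simp only [Finset.mem_Icc, Finset.mem_Ico]; omega
  have c1 : ∑ j ∈ Icc 1 (n-1), (j:ℝ) = (n:ℝ)*((n:ℝ)-1)/2 := by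
    rw [hIcc, Finset.sum_Ico_eq_sub _ hn, sumr1, sumr1]; push_cast; ring
  have c2 : ∑ j ∈ Icc 1 (n-1), (j:ℝ)^2 = (n:ℝ)*((n:ℝ)-1)*(2*(n:ℝ)-1)/6 := by
    rw [hIcc, Finset.sum_Ico_eq_sub _ hn, sumr2, sumr2]; push_cast; ring
  rw [Finset.sum_sub_distrib, ← Finset.mul_sum, ← Finset.sum_mul, c1, c2]
  ring

lemma innerMono (n : ℕ) (a b : ℝ) (hb : 1 ≤ b) (hab : b ≤ a) (h : 0 ≤ (b-1)*(b-2) - 6*((n:ℝ)-b)) :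
    0 ≤ (a-1)*(a-2) - 6*((n:ℝ)-a) := by nlinarith [mul_nonneg (by linarith : (0:ℝ) ≤ a - b) (by linarith : (0:ℝ) ≤ a + b + 3)]

lemma Cnonneg (n u : ℕ) (hn : 5 ≤ n) (hu : u ≤ 2*n-1) : 0 ≤ Cc n u := by
  by_cases hun : u ≤ n
  · exact Csym n u hun
  · push_neg at hun
    set r := u - n with hrdef
    have hr1 : 1 ≤ r := by omega
    have hr2 : r ≤ n-1 := by omega
    have hu' : u = n + r := by omega
    have hCu := csum n hn r hr2
    rw [← hu'] at hCu
    by_cases hpos : 0 ≤ ((n:ℝ)-r-1)*((n:ℝ)-r-2) - 6*r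
    · rw [hCu]
      have h1 : 0 ≤ Cc n n := Csym n n le_rfl
      have h2 : 0 ≤ ∑ ρ ∈ Icc 1 r,
          ((n:ℝ)-ρ)*(((n:ℝ)-ρ-1)*((n:ℝ)-ρ-2) - 6*ρ)/6 := by
        refine Finset.sum_nonneg (fun ρ hρ => ?_)
        simp only [Finset.mem_Icc] at hρ
        have hρr2 : (ρ:ℝ) ≤ r := by exact_mod_cast hρ.2
        have hρ1 : (1:ℝ) ≤ ρ := by exact_mod_cast hρ.1
        have hrn : (r:ℝ) ≤ (n:ℝ)-1 := by
          have h' : r + 1 ≤ n := by omega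
          have h'' : ((r:ℝ)) + 1 ≤ (n:ℝ) := by exact_mod_cast h'
          linarith
        have hmono : 0 ≤ ((n:ℝ)-ρ-1)*((n:ℝ)-ρ-2) - 6*ρ := by
          have := innerMono n ((n:ℝ)-ρ) ((n:ℝ)-r) (by linarith) (by linarith)
            (by nlinarith)
          nlinarith
        have : (0:ℝ) ≤ (n:ℝ)-ρ := by linarith
        positivity
      linarith
    · push_neg at hpos
      have hCfull := csum n hn (n-1) le_rfl
      have hsplit : ∑ ρ ∈ Icc 1 (n-1),
            ((n:ℝ)-ρ)*(((n:ℝ)-ρ-1)*((n:ℝ)-ρ-2) - 6*ρ)/6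
          = (∑ ρ ∈ Icc 1 r, ((n:ℝ)-ρ)*(((n:ℝ)-ρ-1)*((n:ℝ)-ρ-2) - 6*ρ)/6)
            + ∑ ρ ∈ Ioc r (n-1), ((n:ℝ)-ρ)*(((n:ℝ)-ρ-1)*((n:ℝ)-ρ-2) - 6*ρ)/6 := by
        have e1 : Icc 1 (n-1) = Ioc 0 (n-1) := by ext y; simp [Nat.lt_iff_add_one_le]
        have e2 : Icc 1 r = Ioc 0 r := by ext y; simp [Nat.lt_iff_add_one_le]
        rw [e1, e2, Finset.sum_Ioc_consecutive _ (by omega) (by omega)]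
      have hneg : ∑ ρ ∈ Ioc r (n-1),
          ((n:ℝ)-ρ)*(((n:ℝ)-ρ-1)*((n:ℝ)-ρ-2) - 6*ρ)/6 ≤ 0 := by
        refine Finset.sum_nonpos (fun ρ hρ => ?_)
        simp only [Finset.mem_Ioc] at hρ
        have hρr : (r:ℝ) ≤ (ρ:ℝ) := by exact_mod_cast le_of_lt hρ.1
        have hρn : (ρ:ℝ) ≤ (n:ℝ)-1 := by
          have h' : ρ + 1 ≤ n := by omega
          have h'' : ((ρ:ℝ)) + 1 ≤ (n:ℝ) := by exact_mod_cast h'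
          linarith
        have hr1' : (1:ℝ) ≤ (r:ℝ) := by exact_mod_cast hr1
        have hinn : ((n:ℝ)-ρ-1)*((n:ℝ)-ρ-2) - 6*ρ ≤ 0 := by
          by_contra hcon
          push_neg at hcon
          have := innerMono n ((n:ℝ)-r) ((n:ℝ)-ρ) (by linarith) (by linarith) (by nlinarith)
          nlinarith
        have h1 : (0:ℝ) ≤ (n:ℝ)-ρ := by linarith
        have := mul_nonpos_of_nonneg_of_nonpos h1 hinn
        linarith
      have hval : Cc n (n + (n-1)) = (n:ℝ)^2*((n:ℝ)-1)*((n:ℝ)-5)/12 := by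
        rw [show n + (n-1) = 2*n-1 by omega]
        exact Cfull n (by omega)
      have hvn : (0:ℝ) ≤ (n:ℝ)^2*((n:ℝ)-1)*((n:ℝ)-5)/12 := by
        have h5 : (5:ℝ) ≤ (n:ℝ) := by exact_mod_cast hn
        apply div_nonneg _ (by norm_num)
        apply mul_nonneg (mul_nonneg (sq_nonneg _) (by linarith)) (by linarith)
      rw [hval, hsplit] at hCfull
      rw [hCu]
      linarith

lemma CfullIf (n : ℕ) (hn : 1 ≤ n) :
    Cc n (2*n-1) = ∑ j ∈ Icc 1 (n-1), ∑ i ∈ Icc 1 n, (j:ℝ)*((j:ℝ)-(i:ℝ)) := by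
  unfold Cc
  refine Finset.sum_congr rfl (fun j hj => Finset.sum_congr rfl (fun i hi => ?_))
  simp only [Finset.mem_Icc] at hj hi
  rw [if_pos (by omega)]

lemma Skey (n : ℕ) (hn : 5 ≤ n) (x : ℝ) (hx0 : 0 < x) (hx1 : x ≤ 1) :
    0 ≤ ∑ j ∈ Icc 1 (n-1), ∑ i ∈ Icc 1 n, (j:ℝ)*((j:ℝ)-(i:ℝ)) * x^(j+i-1) := by
  have expand : ∀ j ∈ Icc 1 (n-1), ∀ i ∈ Icc 1 n,
      x^(j+i-1) = x^(2*n-2) + ∑ s ∈ Icc 1 (2*n-3),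
        (if j+i ≤ s+1 then x^s - x^(s+1) else 0) := by
    intro j hj i hi
    simp only [Finset.mem_Icc] at hj hi
    have hfil : ∑ s ∈ Icc 1 (2*n-3), (if j+i ≤ s+1 then x^s - x^(s+1) else 0)
        = ∑ s ∈ Icc (j+i-1) (2*n-3), (x^s - x^(s+1)) := by
      rw [← Finset.sum_filter]
      congr 1
      ext y; simp only [Finset.mem_filter, Finset.mem_Icc]; omega
    rw [hfil, telescope x (j+i-1) (2*n-3) (by omega)]
    have : 2*n-3+1 = 2*n-2 := by omega
    rw [this]; ring
  have split : ∑ j ∈ Icc 1 (n-1), ∑ i ∈ Icc 1 n, (j:ℝ)*((j:ℝ)-(i:ℝ)) * x^(j+i-1)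
      = (∑ j ∈ Icc 1 (n-1), ∑ i ∈ Icc 1 n, (j:ℝ)*((j:ℝ)-(i:ℝ))) * x^(2*n-2)
        + ∑ s ∈ Icc 1 (2*n-3), Cc n (s+1) * (x^s - x^(s+1)) := by
    have e1 : ∀ j ∈ Icc 1 (n-1), ∀ i ∈ Icc 1 n,
        (j:ℝ)*((j:ℝ)-(i:ℝ)) * x^(j+i-1)
        = (j:ℝ)*((j:ℝ)-(i:ℝ)) * x^(2*n-2)
          + ∑ s ∈ Icc 1 (2*n-3), (if j+i ≤ s+1 then (j:ℝ)*((j:ℝ)-(i:ℝ))*(x^s - x^(s+1)) else 0) := by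
      intro j hj i hi
      rw [expand j hj i hi, mul_add, Finset.mul_sum]
      congr 1
      refine Finset.sum_congr rfl (fun s hs => ?_)
      split_ifs <;> ring
    calc ∑ j ∈ Icc 1 (n-1), ∑ i ∈ Icc 1 n, (j:ℝ)*((j:ℝ)-(i:ℝ)) * x^(j+i-1)
        = ∑ j ∈ Icc 1 (n-1), ∑ i ∈ Icc 1 n, ((j:ℝ)*((j:ℝ)-(i:ℝ)) * x^(2*n-2)
          + ∑ s ∈ Icc 1 (2*n-3), (if j+i ≤ s+1 then (j:ℝ)*((j:ℝ)-(i:ℝ))*(x^s - x^(s+1)) else 0)) := by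
          exact Finset.sum_congr rfl (fun j hj => Finset.sum_congr rfl (fun i hi => e1 j hj i hi))
      _ = (∑ j ∈ Icc 1 (n-1), ∑ i ∈ Icc 1 n, (j:ℝ)*((j:ℝ)-(i:ℝ))) * x^(2*n-2)
            + ∑ j ∈ Icc 1 (n-1), ∑ i ∈ Icc 1 n, ∑ s ∈ Icc 1 (2*n-3),
              (if j+i ≤ s+1 then (j:ℝ)*((j:ℝ)-(i:ℝ))*(x^s - x^(s+1)) else 0) := by
          rw [Finset.sum_mul]
          rw [← Finset.sum_add_distrib]
          refine Finset.sum_congr rfl (fun j hj => ?_)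
          rw [Finset.sum_mul, ← Finset.sum_add_distrib]
      _ = (∑ j ∈ Icc 1 (n-1), ∑ i ∈ Icc 1 n, (j:ℝ)*((j:ℝ)-(i:ℝ))) * x^(2*n-2)
            + ∑ s ∈ Icc 1 (2*n-3), Cc n (s+1) * (x^s - x^(s+1)) := by
          congr 1
          rw [Finset.sum_congr rfl (fun j (hj : j ∈ Icc 1 (n-1)) => Finset.sum_comm),
            Finset.sum_comm]
          refine Finset.sum_congr rfl (fun s hs => ?_)
          unfold Cc
          rw [Finset.sum_mul]
          refine Finset.sum_congr rfl (fun j hj => ?_)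
          rw [Finset.sum_mul]
          refine Finset.sum_congr rfl (fun i hi => ?_)
          split_ifs <;> ring
  rw [split]
  have h1 : 0 ≤ (∑ j ∈ Icc 1 (n-1), ∑ i ∈ Icc 1 n, (j:ℝ)*((j:ℝ)-(i:ℝ))) * x^(2*n-2) := by
    rw [← CfullIf n (by omega)]
    exact mul_nonneg (Cnonneg n (2*n-1) (by omega) le_rfl) (by positivity)
  have h2 : 0 ≤ ∑ s ∈ Icc 1 (2*n-3), Cc n (s+1) * (x^s - x^(s+1)) := by
    refine Finset.sum_nonneg (fun s hs => ?_)
    simp only [Finset.mem_Icc] at hs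
    have hC := Cnonneg n (s+1) hn (by omega)
    have hxs : 0 ≤ x^s - x^(s+1) := by
      have : x^(s+1) ≤ x^s := by
        calc x^(s+1) = x^s * x := by ring
        _ ≤ x^s * 1 := by
            apply mul_le_mul_of_nonneg_left hx1 (le_of_lt (pow_pos hx0 s))
        _ = x^s := by ring
      linarith
    exact mul_nonneg hC hxs
  linarith

/-- Lemma 3 (key step): for `γ ≥ 3`, the function
`f_γ(λ) = (∑_{j=1}^{γ+1} j λ^j)/(∑_{i=1}^{γ+2} λ^i)` is nondecreasing on `(0,1]`. -/
theorem f_monotone (γ : ℕ) (hγ : 3 ≤ γ) (l₁ l₂ : ℝ)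
    (h0 : 0 < l₁) (h12 : l₁ ≤ l₂) (h1 : l₂ ≤ 1) :
    (∑ j ∈ Finset.Icc 1 (γ + 1), (j : ℝ) * l₁ ^ j) /
        (∑ i ∈ Finset.Icc 1 (γ + 2), l₁ ^ i) ≤
      (∑ j ∈ Finset.Icc 1 (γ + 1), (j : ℝ) * l₂ ^ j) /
        (∑ i ∈ Finset.Icc 1 (γ + 2), l₂ ^ i) := by
  set n : ℕ := γ + 2 with hn
  have hn5 : 5 ≤ n := by omega
  have hIccN : Icc 1 (γ+1) = Icc 1 (n-1) := by congr 1
  set N : ℝ → ℝ := fun y => ∑ j ∈ Icc 1 (γ+1), (j:ℝ) * y^j with hN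
  set D : ℝ → ℝ := fun y => ∑ i ∈ Icc 1 n, y^i with hD
  have hDpos : ∀ y : ℝ, 0 < y → 0 < D y := by
    intro y hy
    apply Finset.sum_pos (fun i _ => pow_pos hy i)
    exact ⟨1, by simp [Finset.mem_Icc]; omega⟩
  have hNd : ∀ y : ℝ, HasDerivAt N (∑ j ∈ Icc 1 (γ+1), (j:ℝ)*((j:ℝ)*y^(j-1))) y := by
    intro y
    apply HasDerivAt.fun_sum
    intro j _
    exact (hasDerivAt_pow j y).const_mul (j:ℝ)
  have hDd : ∀ y : ℝ, HasDerivAt D (∑ i ∈ Icc 1 n, (i:ℝ)*y^(i-1)) y := by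
    intro y
    apply HasDerivAt.fun_sum
    intro i _
    exact hasDerivAt_pow i y
  set f : ℝ → ℝ := fun y => N y / D y with hf
  have hfd : ∀ y : ℝ, 0 < y → HasDerivAt f
      (((∑ j ∈ Icc 1 (γ+1), (j:ℝ)*((j:ℝ)*y^(j-1))) * D y
        - N y * (∑ i ∈ Icc 1 n, (i:ℝ)*y^(i-1))) / (D y)^2) y := by
    intro y hy
    exact (hNd y).div (hDd y) (ne_of_gt (hDpos y hy))
  have hkey : ∀ y : ℝ, 0 < y → y ≤ 1 →
      0 ≤ (∑ j ∈ Icc 1 (γ+1), (j:ℝ)*((j:ℝ)*y^(j-1))) * D y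
        - N y * (∑ i ∈ Icc 1 n, (i:ℝ)*y^(i-1)) := by
    intro y hy0 hy1
    have e : (∑ j ∈ Icc 1 (γ+1), (j:ℝ)*((j:ℝ)*y^(j-1))) * D y
        - N y * (∑ i ∈ Icc 1 n, (i:ℝ)*y^(i-1))
        = ∑ j ∈ Icc 1 (n-1), ∑ i ∈ Icc 1 n, (j:ℝ)*((j:ℝ)-(i:ℝ)) * y^(j+i-1) := by
      rw [hN, hD, ← hIccN, Finset.sum_mul_sum, Finset.sum_mul_sum, ← Finset.sum_sub_distrib]
      refine Finset.sum_congr rfl (fun j hj => ?_)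
      rw [← Finset.sum_sub_distrib]
      refine Finset.sum_congr rfl (fun i hi => ?_)
      simp only [Finset.mem_Icc] at hj hi
      have e1 : y^(j-1)*y^i = y^(j+i-1) := by rw [← pow_add]; congr 1; omega
      have e2 : y^j*y^(i-1) = y^(j+i-1) := by rw [← pow_add]; congr 1; omega
      calc (j:ℝ)*((j:ℝ)*y^(j-1))*y^i - (j:ℝ)*y^j*((i:ℝ)*y^(i-1))
          = (j:ℝ)*(j:ℝ)*(y^(j-1)*y^i) - (j:ℝ)*(i:ℝ)*(y^j*y^(i-1)) := by ring
        _ = (j:ℝ)*((j:ℝ)-(i:ℝ)) * y^(j+i-1) := by rw [e1, e2]; ring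
    rw [e]
    exact Skey n hn5 y hy0 hy1
  have hmono : MonotoneOn f (Set.Ioc (0:ℝ) 1) := by
    apply monotoneOn_of_deriv_nonneg (convex_Ioc 0 1)
    · apply ContinuousOn.div
      · exact (continuous_finset_sum _ (fun j _ => continuous_const.mul (continuous_pow j))).continuousOn
      · exact (continuous_finset_sum _ (fun i _ => continuous_pow i)).continuousOn
      · intro y hy
        exact ne_of_gt (hDpos y hy.1)
    · intro y hy
      rw [interior_Ioc] at hy
      exact ((hfd y hy.1).differentiableAt).differentiableWithinAt
    · intro y hy
      rw [interior_Ioc] at hy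
      rw [(hfd y hy.1).deriv]
      exact div_nonneg (hkey y hy.1 (le_of_lt hy.2)) (sq_nonneg _)
  have m1 : l₁ ∈ Set.Ioc (0:ℝ) 1 := ⟨h0, le_trans h12 h1⟩
  have m2 : l₂ ∈ Set.Ioc (0:ℝ) 1 := ⟨lt_of_lt_of_le h0 h12, h1⟩
  exact hmono m1 m2 h12
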